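/- Hölder roughness: if w : [0,T] → ℝ^d is (γ,ρ)-irregular, then for any θ > (1−γ)/ρ, w is θ-Hölder rough with infinite modulus of roughness: for every L > 0 there exists ε₀ > 0 such that for every direction v with |v| = 1, every s ∈ [0,T], and every ε ∈ (0,ε₀], there exists t ∈ [0,T] with |t−s| < ε and |v · (w_t − w_s)| ≥ L ε^θ. -/

import Mathlib

open MeasureTheory Real

noncomputable section

/-- `Φ^w_{s,t}(ξ) = ∫_s^t exp(i ξ · w_r) dr`. -/
def phiW {d : ℕ} (w : ℝ → EuclideanSpace ℝ (Fin d)) (ξ : EuclideanSpace ℝ (Fin d))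
    (s t : ℝ) : ℂ :=
  ∫ r in s..t, Complex.exp (Complex.I * ((inner ℝ ξ (w r) : ℝ) : ℂ))

/-- `w` is `(γ,ρ)`-irregular on `[0,T]` with constant `C`. -/
def IsIrregularWith {d : ℕ} (T γ ρ C : ℝ) (w : ℝ → EuclideanSpace ℝ (Fin d)) : Prop :=
  ∀ ξ : EuclideanSpace ℝ (Fin d), ξ ≠ 0 → ∀ s t : ℝ, 0 ≤ s → s ≤ t → t ≤ T →
    ‖phiW w ξ s t‖ ≤ C * ‖ξ‖ ^ (-ρ) * (t - s) ^ γ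

/-- Hölder roughness: if `w` is `(γ,ρ)`-irregular then for any `θ > (1−γ)/ρ`, `w` is
`θ`-Hölder rough with infinite modulus of roughness: for every `L > 0` there exists
`ε₀ > 0` such that for every unit direction `v`, every `s ∈ [0,T]` and every
`ε ∈ (0,ε₀]` there exists `t ∈ [0,T]` with `|t−s| < ε` and `|v·(w_t − w_s)| ≥ L ε^θ`. -/
lemma lower_bd {f : ℝ → ℝ} (hf : Continuous f) {a b : ℝ} (hab : a ≤ b)
    (hb : ∀ r ∈ Set.Icc a b, |f r| ≤ π / 3) :
    (b - a) / 2 ≤ ‖∫ r in a..b, Complex.exp (Complex.I * (f r : ℂ))‖ := by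
  have hcont : Continuous fun r => Complex.exp (Complex.I * (f r : ℂ)) := by
    fun_prop
  have hint : IntervalIntegrable (fun r => Complex.exp (Complex.I * (f r : ℂ)))
      volume a b := hcont.intervalIntegrable a b
  have hre : (∫ r in a..b, Complex.exp (Complex.I * (f r : ℂ))).re
      = ∫ r in a..b, Real.cos (f r) := by
    have := (Complex.reCLM.intervalIntegral_comp_comm hint).symm
    simp only [Complex.reCLM_apply] at this
    rw [this]
    congr 1
    ext r
    rw [mul_comm, Complex.exp_ofReal_mul_I_re]
  have hcos : ∀ r ∈ Set.Icc a b, (1:ℝ)/2 ≤ Real.cos (f r) := by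
    intro r hr
    have h1 := hb r hr
    have h2 : Real.cos (π/3) ≤ Real.cos (f r) := by
      rw [← Real.cos_abs (f r)]
      apply Real.cos_le_cos_of_nonneg_of_le_pi (abs_nonneg _) _ h1
      linarith [Real.pi_pos]
    rwa [Real.cos_pi_div_three] at h2
  have h3 : (b - a) / 2 ≤ ∫ r in a..b, Real.cos (f r) := by
    have : ∫ r in a..b, (1:ℝ)/2 = (b - a) / 2 := by simp; ring
    rw [← this]
    apply intervalIntegral.integral_mono_on hab
      (intervalIntegrable_const) ((Real.continuous_cos.comp hf).intervalIntegrable a b)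
    intro x hx; exact hcos x hx
  calc (b - a)/2 ≤ (∫ r in a..b, Complex.exp (Complex.I * (f r : ℂ))).re := by
        rw [hre]; exact h3
    _ ≤ ‖∫ r in a..b, Complex.exp (Complex.I * (f r : ℂ))‖ := Complex.re_le_norm _

theorem holder_rough {d : ℕ} {T γ ρ θ : ℝ} (hT : 0 < T)
    (hγ : γ ∈ Set.Ioo (0 : ℝ) 1) (hρ : 0 < ρ) (hθ : (1 - γ) / ρ < θ)
    (w : ℝ → EuclideanSpace ℝ (Fin d)) (hw : Continuous w)
    (K : ℝ) (hK : IsIrregularWith T γ ρ K w) :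
    ∀ L : ℝ, 0 < L → ∃ ε₀ > (0 : ℝ),
      ∀ v : EuclideanSpace ℝ (Fin d), ‖v‖ = 1 →
      ∀ s ∈ Set.Icc (0 : ℝ) T, ∀ ε : ℝ, 0 < ε → ε ≤ ε₀ →
        ∃ t ∈ Set.Icc (0 : ℝ) T, |t - s| < ε ∧
          L * ε ^ θ ≤ |(inner ℝ v (w t - w s) : ℝ)| := by
  intro L hL
  have hπ := Real.pi_pos
  set δ := γ + θ * ρ - 1 with hδdef
  have hδ : 0 < δ := by
    have : 1 - γ < θ * ρ := by
      have := (div_lt_iff₀ hρ).mp hθ; linarith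
    simp only [hδdef]; linarith
  set C : ℝ := (max K 1) * (3 * L / π) ^ ρ with hCdef
  have hC : 0 < C := by
    apply mul_pos (lt_of_lt_of_le one_pos (le_max_right K 1))
    exact Real.rpow_pos_of_pos (by positivity) ρ
  refine ⟨min T ((1 / (8 * C)) ^ (1 / δ)), lt_min hT (Real.rpow_pos_of_pos (by positivity) _), ?_⟩
  intro v hv s hs ε hε hεε₀
  have hεT : ε ≤ T := hεε₀.trans (min_le_left _ _)
  by_contra hcon
  push_neg at hcon
  set M : ℝ := L * ε ^ θ with hMdef
  have hM : 0 < M := mul_pos hL (Real.rpow_pos_of_pos hε θ)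
  set c : ℝ := π / (3 * M) with hcdef
  have hc : 0 < c := by positivity
  set ξ : EuclideanSpace ℝ (Fin d) := c • v with hξdef
  have hξn : ‖ξ‖ = c := by
    rw [hξdef, norm_smul, hv, Real.norm_eq_abs, abs_of_pos hc, mul_one]
  have hξ0 : ξ ≠ 0 := by
    intro h; rw [h, norm_zero] at hξn; exact (ne_of_gt hc) hξn.symm
  -- choose the interval [a, a + ε/2]
  obtain ⟨a, ha0, haT, hain⟩ : ∃ a : ℝ, 0 ≤ a ∧ a + ε / 2 ≤ T ∧
      ∀ r ∈ Set.Icc a (a + ε / 2), |r - s| < ε := by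
    rcases le_or_gt s (T / 2) with h | h
    · refine ⟨s, hs.1, by linarith, ?_⟩
      intro r hr
      rw [abs_lt]; constructor <;> [linarith [hr.1]; linarith [hr.2]]
    · refine ⟨s - ε / 2, by linarith, by linarith [hs.2], ?_⟩
      intro r hr
      rw [abs_lt]; constructor <;> [linarith [hr.1]; linarith [hr.2]]
  set b : ℝ := a + ε / 2 with hbdef
  have hab : a ≤ b := by simp only [hbdef]; linarith
  -- the small-oscillation bound
  have hosc : ∀ r ∈ Set.Icc a b, |c * (inner ℝ v (w r - w s) : ℝ)| ≤ π / 3 := by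
    intro r hr
    have hrT : r ∈ Set.Icc (0 : ℝ) T := ⟨ha0.trans hr.1, hr.2.trans haT⟩
    have hlt : |(inner ℝ v (w r - w s) : ℝ)| < M := hcon r hrT (hain r hr)
    have : |c * (inner ℝ v (w r - w s) : ℝ)| = c * |(inner ℝ v (w r - w s) : ℝ)| := by
      rw [abs_mul, abs_of_pos hc]
    rw [this]
    have h2 : c * |(inner ℝ v (w r - w s) : ℝ)| ≤ c * M :=
      mul_le_mul_of_nonneg_left hlt.le hc.le
    have h3 : c * M = π / 3 := by
      rw [hcdef]; field_simp
    linarith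
  -- lower bound on the oscillatory integral
  have hfc : Continuous fun r => c * (inner ℝ v (w r - w s) : ℝ) := by
    apply continuous_const.mul
    exact Continuous.inner continuous_const (hw.sub continuous_const)
  have hlow := lower_bd hfc hab hosc
  -- relate to phiW
  have hphi : ‖phiW w ξ a b‖
      = ‖∫ r in a..b, Complex.exp (Complex.I * ((c * (inner ℝ v (w r - w s) : ℝ) : ℝ) : ℂ))‖ := by
    have hfactor : ∀ r : ℝ, Complex.exp (Complex.I * ((inner ℝ ξ (w r) : ℝ) : ℂ))
        = Complex.exp (Complex.I * ((c * (inner ℝ v (w s) : ℝ) : ℝ) : ℂ))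
          * Complex.exp (Complex.I * ((c * (inner ℝ v (w r - w s) : ℝ) : ℝ) : ℂ)) := by
      intro r
      rw [← Complex.exp_add]
      congr 1
      have h1 : (inner ℝ ξ (w r) : ℝ) = c * (inner ℝ v (w r) : ℝ) := real_inner_smul_left v (w r) c
      have h2 : (inner ℝ v (w r - w s) : ℝ) = (inner ℝ v (w r) : ℝ) - (inner ℝ v (w s) : ℝ) :=
        inner_sub_right v (w r) (w s)
      rw [h1, h2]
      push_cast
      ring
    rw [phiW]
    simp_rw [hfactor]
    rw [intervalIntegral.integral_const_mul, norm_mul]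
    have : ‖Complex.exp (Complex.I * ((c * (inner ℝ v (w s) : ℝ) : ℝ) : ℂ))‖ = 1 := by
      rw [Complex.norm_exp]
      simp
    rw [this, one_mul]
  rw [← hphi] at hlow
  -- apply irregularity
  have hup := hK ξ hξ0 a b ha0 hab haT
  have hba : b - a = ε / 2 := by simp [hbdef]
  rw [hba] at hup hlow
  -- combine
  have key : ε / 4 ≤ C * ε ^ (θ * ρ + γ) := by
    have h1 : ε / 4 ≤ K * ‖ξ‖ ^ (-ρ) * (ε / 2) ^ γ := by
      calc ε / 4 = (ε / 2) / 2 := by ring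
        _ ≤ ‖phiW w ξ a b‖ := hlow
        _ ≤ K * ‖ξ‖ ^ (-ρ) * (ε / 2) ^ γ := hup
    have hxn : ‖ξ‖ ^ (-ρ) = (3 * L / π) ^ ρ * ε ^ (θ * ρ) := by
      rw [hξn, Real.rpow_neg hc.le, ← Real.inv_rpow hc.le]
      have : c⁻¹ = 3 * L / π * ε ^ θ := by
        rw [hcdef, hMdef]; field_simp
      rw [this, Real.mul_rpow (by positivity) (Real.rpow_nonneg hε.le θ),
        ← Real.rpow_mul hε.le]
    have h2 : (ε / 2) ^ γ ≤ ε ^ γ :=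
      Real.rpow_le_rpow (by positivity) (by linarith) hγ.1.le
    have hK1 : K ≤ max K 1 := le_max_left K 1
    have hξnn : (0:ℝ) ≤ ‖ξ‖ ^ (-ρ) := Real.rpow_nonneg (norm_nonneg ξ) _
    calc ε / 4 ≤ K * ‖ξ‖ ^ (-ρ) * (ε / 2) ^ γ := h1
      _ ≤ (max K 1) * ‖ξ‖ ^ (-ρ) * (ε / 2) ^ γ := by
          apply mul_le_mul_of_nonneg_right _ (Real.rpow_nonneg (by positivity) γ)
          exact mul_le_mul_of_nonneg_right hK1 hξnn
      _ ≤ (max K 1) * ‖ξ‖ ^ (-ρ) * ε ^ γ := by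
          apply mul_le_mul_of_nonneg_left h2
          exact mul_nonneg (le_trans zero_le_one (le_max_right K 1)) hξnn
      _ = C * ε ^ (θ * ρ + γ) := by
          rw [hxn, Real.rpow_add hε, hCdef]; ring
  have hsplit : ε ^ (θ * ρ + γ) = ε ^ δ * ε := by
    rw [show θ * ρ + γ = δ + 1 from by rw [hδdef]; ring, Real.rpow_add hε, Real.rpow_one]
  rw [hsplit] at key
  have key2 : 1 / 4 ≤ C * ε ^ δ := by
    have h2 : (1/4:ℝ) * ε ≤ (C * ε ^ δ) * ε := by nlinarith [key]
    have := le_of_mul_le_mul_right h2 hε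
    linarith
  have hεδ : ε ^ δ ≤ 1 / (8 * C) := by
    have h1 : ε ≤ (1 / (8 * C)) ^ (1 / δ) := hεε₀.trans (min_le_right _ _)
    calc ε ^ δ ≤ ((1 / (8 * C)) ^ (1 / δ)) ^ δ :=
          Real.rpow_le_rpow hε.le h1 hδ.le
      _ = 1 / (8 * C) := by
          rw [one_div δ, Real.rpow_inv_rpow (by positivity) (ne_of_gt hδ)]
  have : C * ε ^ δ ≤ 1 / 8 := by
    calc C * ε ^ δ ≤ C * (1 / (8 * C)) := mul_le_mul_of_nonneg_left hεδ hC.le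
      _ = 1 / 8 := by field_simp
  linarith
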